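/- Let r ≥ 2 and let k_1, …, k_r be variables with K = k_1 + ⋯ + k_r. Then k_1 k_2 ⋯ k_r · (K − 1)_{r−2} = Σ_{j ≥ 1} (k_1^j / j!) · Σ_{(X_1,…,X_j)} ∏_{i=1}^{j} (∏_{ℓ ∈ X_i} k_ℓ) · (K_{X_i} − 1)_{|X_i| − 1}, where the inner sum runs over all ordered j-tuples (X_1, …, X_j) of pairwise disjoint nonempty sets whose union is {2,…,r}, and K_{X_i} = Σ_{u ∈ X_i} k_u. (Equivalently, the right-hand side is the sum over set partitions {X_1,…,X_j} of {2,…,r} of k_1^j ∏_i (∏_{ℓ∈X_i} k_ℓ)(K_{X_i} − 1)_{|X_i|−1}.) This is an identity in ℚ[k_1,…,k_r]. -/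

import Mathlib

/-- The falling factorial `(a)_m = a(a−1)⋯(a−m+1)`, for `m ≥ 0` (with `(a)_0 = 1`). -/
def ffall {R : Type*} [CommRing R] (a : R) (m : ℕ) : R :=
  ∏ i ∈ Finset.range m, (a - (i : R))

namespace S14
open Finset
variable {R : Type*} [CommRing R] {S' : Type*} [CommRing S']

@[simp] lemma ffall_zero (a : R) : ffall a 0 = 1 := by simp [ffall]

lemma ffall_succ (a : R) (m : ℕ) : ffall a (m+1) = ffall a m * (a - m) := by
  simp [ffall, Finset.prod_range_succ]

lemma ffall_top (a : R) (m : ℕ) : ffall a (m+1) = a * ffall (a-1) m := by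
  rw [ffall, Finset.prod_range_succ']
  simp only [Nat.cast_zero, sub_zero, mul_comm]
  congr 1
  apply Finset.prod_congr rfl
  intro i _
  push_cast
  ring

lemma ffall_add_one (a : R) (m : ℕ) :
    ffall (a+1) m = ffall a m + m * ffall a (m-1) := by
  cases m with
  | zero => simp
  | succ m =>
    rw [ffall_top, add_sub_cancel_right, ffall_succ, Nat.add_sub_cancel]
    push_cast
    ring

def Ksum (k : ℕ → R) (S : Finset ℕ) : R := ∑ i ∈ S, k i

def sig (k : ℕ → R) (u : R) (C : Finset ℕ) : R := ffall (u + Ksum k C - 1) C.card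

def Th (k : ℕ → R) (U : Finset ℕ) (u v : R) : R :=
  ∑ C ∈ U.powerset, sig k u C * sig k v (U \ C)

def rho (k : ℕ → R) (x : R) (D : Finset ℕ) : R :=
  if D = ∅ then 1 else x * ffall (x + Ksum k D - 1) (D.card - 1)

lemma map_ffall (φ : R →+* S') (a : R) (m : ℕ) : φ (ffall a m) = ffall (φ a) m := by
  simp [ffall, map_prod]

lemma map_Ksum (φ : R →+* S') (k : ℕ → R) (S : Finset ℕ) :
    φ (Ksum k S) = Ksum (φ ∘ k) S := by simp [Ksum]

lemma map_sig (φ : R →+* S') (k : ℕ → R) (u : R) (C : Finset ℕ) :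
    φ (sig k u C) = sig (φ ∘ k) (φ u) C := by
  simp [sig, map_ffall, map_Ksum]

lemma map_rho (φ : R →+* S') (k : ℕ → R) (x : R) (D : Finset ℕ) :
    φ (rho k x D) = rho (φ ∘ k) (φ x) D := by
  unfold rho
  split <;> simp [map_ffall, map_Ksum]

lemma map_Th (φ : R →+* S') (k : ℕ → R) (U : Finset ℕ) (u v : R) :
    φ (Th k U u v) = Th (φ ∘ k) U (φ u) (φ v) := by
  simp [Th, map_sum, map_mul, map_sig]

lemma Ksum_insert (k : ℕ → R) {t : ℕ} {D : Finset ℕ} (h : t ∉ D) :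
    Ksum k (insert t D) = k t + Ksum k D := Finset.sum_insert h

lemma ff_insert (k : ℕ → R) (u : R) {t : ℕ} {D : Finset ℕ} (h : t ∉ D) :
    ffall (u + Ksum k (insert t D) - 1) ((insert t D).card - 1) = sig k (u + k t) D := by
  rw [Ksum_insert k h, Finset.card_insert_of_notMem h, Nat.add_sub_cancel, sig]
  congr 1
  ring

lemma sig_add_one (k : ℕ → R) (u : R) (C : Finset ℕ) :
    sig k (u+1) C = sig k u C + (C.card : R) * ffall (u + Ksum k C - 1) (C.card - 1) := by
  have h : u + 1 + Ksum k C - 1 = (u + Ksum k C - 1) + 1 := by ring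
  rw [sig, h, ffall_add_one, sig]

lemma sdiff_insert_eq (U C : Finset ℕ) (t : ℕ) :
    U \ insert t C = (U.erase t) \ C := by
  rw [Finset.sdiff_insert, Finset.erase_sdiff_comm]

lemma sdiff_eq_insert_sdiff {U C : Finset ℕ} {t : ℕ} (ht : t ∈ U) (hC : C ⊆ U.erase t) :
    U \ C = insert t ((U.erase t) \ C) := by
  have htC : t ∉ C := fun h => Finset.notMem_erase t U (hC h)
  ext x
  simp only [Finset.mem_sdiff, Finset.mem_insert, Finset.mem_erase]
  constructor
  · intro ⟨hxU, hxC⟩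
    by_cases hx : x = t
    · exact Or.inl hx
    · exact Or.inr ⟨⟨hx, hxU⟩, hxC⟩
  · rintro (rfl | ⟨⟨_, hxU⟩, hxC⟩)
    · exact ⟨ht, htC⟩
    · exact ⟨hxU, hxC⟩

lemma sum_subsets_mem (U : Finset ℕ) (t : ℕ) (ht : t ∈ U) (f : Finset ℕ → R) :
    ∑ C ∈ U.powerset, (if t ∈ C then f C else 0)
      = ∑ C ∈ (U.erase t).powerset, f (insert t C) := by
  rw [← Finset.sum_filter]
  apply Finset.sum_nbij' (fun C => C.erase t) (fun C => insert t C)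
  · intro C hC
    simp only [Finset.mem_filter, Finset.mem_powerset] at hC
    simpa [Finset.mem_powerset] using Finset.erase_subset_erase t hC.1
  · intro C hC
    simp only [Finset.mem_powerset] at hC
    have htC : t ∉ C := fun h => Finset.notMem_erase t U (hC h)
    simp only [Finset.mem_filter, Finset.mem_powerset]
    exact ⟨Finset.insert_subset ht (hC.trans (Finset.erase_subset t U)), Finset.mem_insert_self t C⟩
  · intro C hC
    simp only [Finset.mem_filter] at hC
    exact Finset.insert_erase hC.2
  · intro C hC
    simp only [Finset.mem_powerset] at hC
    exact Finset.erase_insert (fun h => Finset.notMem_erase t U (hC h))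
  · intro C hC
    simp only [Finset.mem_filter] at hC
    rw [Finset.insert_erase hC.2]

lemma powerset_erase' (U : Finset ℕ) (t : ℕ) :
    (U.erase t).powerset = U.powerset.filter (fun C => t ∉ C) := by
  ext C
  simp only [Finset.mem_powerset, Finset.mem_filter, Finset.subset_erase]

lemma theta_one (n : ℕ)
    (IH : ∀ (U : Finset ℕ), U.card ≤ n → ∀ (k : ℕ → ℚ) (u v w : ℚ),
        Th k U (u+w) v = Th k U u (v+w))
    (U : Finset ℕ) (hU : U.card ≤ n + 1) (k : ℕ → ℚ) (u v : ℚ) :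
    Th k U (u+1) v = Th k U u (v+1) := by
  have key1 : Th k U (u+1) v = Th k U u v + ∑ t ∈ U, Th k (U.erase t) (u + k t) v := by
    rw [Th]
    simp only [sig_add_one k u, add_mul, Finset.sum_add_distrib]
    rw [← Th]
    congr 1
    have expand : ∀ C ∈ U.powerset,
        (C.card : ℚ) * ffall (u + Ksum k C - 1) (C.card - 1) * sig k v (U \ C)
        = ∑ t ∈ U, (if t ∈ C then ffall (u + Ksum k C - 1) (C.card - 1) * sig k v (U \ C) else 0) := by
      intro C hC
      rw [Finset.mem_powerset] at hC
      rw [Finset.sum_ite_mem, Finset.inter_eq_right.mpr hC, Finset.sum_const, nsmul_eq_mul, mul_assoc]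
    rw [Finset.sum_congr rfl expand, Finset.sum_comm]
    apply Finset.sum_congr rfl
    intro t ht
    rw [sum_subsets_mem U t ht, Th]
    apply Finset.sum_congr rfl
    intro C hC
    rw [Finset.mem_powerset] at hC
    have htC : t ∉ C := fun h => Finset.notMem_erase t U (hC h)
    rw [sdiff_insert_eq U C t, ff_insert k u htC]
  have key2 : Th k U u (v+1) = Th k U u v + ∑ t ∈ U, Th k (U.erase t) u (v + k t) := by
    rw [Th]
    simp only [sig_add_one k v, mul_add, Finset.sum_add_distrib]
    rw [← Th]
    congr 1
    have expand : ∀ C ∈ U.powerset,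
        sig k u C * (((U \ C).card : ℚ) * ffall (v + Ksum k (U \ C) - 1) ((U \ C).card - 1))
        = ∑ t ∈ U, (if t ∉ C then sig k u C * ffall (v + Ksum k (U \ C) - 1) ((U \ C).card - 1) else 0) := by
      intro C hC
      rw [Finset.mem_powerset] at hC
      have : ∀ t, (t ∈ U → ((t ∉ C) ↔ (t ∈ U \ C))) := by
        intro t htU
        simp [Finset.mem_sdiff, htU]
      rw [Finset.sum_congr rfl (fun t htU => by rw [if_congr (this t htU) rfl rfl]),
        Finset.sum_ite_mem, Finset.inter_eq_right.mpr (Finset.sdiff_subset), Finset.sum_const,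
        nsmul_eq_mul]
      ring
    rw [Finset.sum_congr rfl expand, Finset.sum_comm]
    apply Finset.sum_congr rfl
    intro t ht
    rw [← Finset.sum_filter, ← powerset_erase' U t, Th]
    apply Finset.sum_congr rfl
    intro C hC
    rw [Finset.mem_powerset] at hC
    have hins := sdiff_eq_insert_sdiff ht hC
    have htDC : t ∉ (U.erase t) \ C := fun h => Finset.notMem_erase t U (Finset.mem_sdiff.mp h).1
    rw [hins, ff_insert k v htDC]
  rw [key1, key2]
  congr 1
  apply Finset.sum_congr rfl
  intro t ht
  exact IH (U.erase t) (by
    have := Finset.card_erase_of_mem ht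
    omega) k u v (k t)

theorem theta : ∀ (n : ℕ) (U : Finset ℕ), U.card ≤ n → ∀ (k : ℕ → ℚ) (u v w : ℚ),
    Th k U (u+w) v = Th k U u (v+w) := by
  intro n
  induction n with
  | zero =>
    intro U hU k u v w
    have hUe : U = ∅ := Finset.card_eq_zero.mp (Nat.le_zero.mp hU)
    subst hUe
    simp [Th, sig, Ksum]
  | succ n IH =>
    intro U hU k u v w
    have Qm : ∀ (m : ℕ) (u v : ℚ), Th k U (u + m) v = Th k U u (v + m) := by
      intro m
      induction m with
      | zero => intro u v; simp
      | succ m IHm =>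
        intro u v
        have h1 : (u + ((m:ℚ)+1)) = ((u+1) + (m:ℚ)) := by ring
        push_cast
        rw [h1, IHm (u+1) v, theta_one n IH U hU k u (v + m), add_assoc]
    have heval1 : ∀ x : ℚ,
        Polynomial.eval x (Th (fun i => Polynomial.C (k i)) U (Polynomial.C u + Polynomial.X) (Polynomial.C v))
          = Th k U (u + x) v := by
      intro x
      have h := map_Th (Polynomial.evalRingHom x) (fun i => Polynomial.C (k i)) U
        (Polynomial.C u + Polynomial.X) (Polynomial.C v)
      have hk : (Polynomial.eval x ∘ fun i => Polynomial.C (k i)) = k := by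
        funext i; simp
      simpa [hk] using h
    have heval2 : ∀ x : ℚ,
        Polynomial.eval x (Th (fun i => Polynomial.C (k i)) U (Polynomial.C u) (Polynomial.C v + Polynomial.X))
          = Th k U u (v + x) := by
      intro x
      have h := map_Th (Polynomial.evalRingHom x) (fun i => Polynomial.C (k i)) U
        (Polynomial.C u) (Polynomial.C v + Polynomial.X)
      have hk : (Polynomial.eval x ∘ fun i => Polynomial.C (k i)) = k := by
        funext i; simp
      simpa [hk] using h
    have hP : (Th (fun i => Polynomial.C (k i)) U (Polynomial.C u + Polynomial.X) (Polynomial.C v))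
        = (Th (fun i => Polynomial.C (k i)) U (Polynomial.C u) (Polynomial.C v + Polynomial.X)) := by
      apply Polynomial.eq_of_infinite_eval_eq
      apply Set.infinite_of_injective_forall_mem (f := (Nat.cast : ℕ → ℚ)) Nat.cast_injective
      intro m
      simp only [Set.mem_setOf_eq, heval1, heval2]
      exact Qm m u v
    calc Th k U (u+w) v = _ := (heval1 w).symm
      _ = _ := by rw [hP]
      _ = Th k U u (v+w) := heval2 w

lemma rho_insert (k : ℕ → ℚ) (x : ℚ) {t : ℕ} {D : Finset ℕ} (h : t ∉ D) :
    rho k x (insert t D) = x * sig k (x + k t) D := by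
  rw [rho, if_neg (Finset.insert_ne_empty t D), Ksum_insert k h,
    Finset.card_insert_of_notMem h, Nat.add_sub_cancel, sig]
  congr 2
  ring

lemma card_sdiff_q {C U : Finset ℕ} (h : C ⊆ U) :
    ((U \ C).card : ℚ) = (U.card : ℚ) - (C.card : ℚ) := by
  have := Finset.card_sdiff_add_card_eq_card h
  push_cast [← this]
  ring

lemma Ksum_sdiff (k : ℕ → ℚ) {C U : Finset ℕ} (h : C ⊆ U) :
    Ksum k (U \ C) = Ksum k U - Ksum k C := by
  have := Finset.sum_sdiff (f := k) h
  rw [Ksum, Ksum, Ksum, ← this]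
  ring

lemma rho_mul (k : ℕ → ℚ) (x : ℚ) (D : Finset ℕ) :
    rho k x D * (x + Ksum k D - D.card) = x * sig k x D := by
  by_cases hD : D = ∅
  · subst hD
    simp [rho, sig, Ksum]
  · obtain ⟨d', hd⟩ : ∃ d', D.card = d' + 1 := by
      have : D.card ≠ 0 := fun h => hD (Finset.card_eq_zero.mp h)
      exact ⟨D.card - 1, by omega⟩
    rw [rho, if_neg hD, sig, hd, Nat.add_sub_cancel, ffall_succ]
    push_cast
    ring

theorem Hqq : ∀ (n : ℕ) (U : Finset ℕ), U.card ≤ n → ∀ (k : ℕ → ℚ) (a x : ℚ),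
    ffall (x + a + Ksum k U - 1) U.card
      = ∑ C ∈ U.powerset, sig k a C * rho k x (U \ C) := by
  intro n
  induction n with
  | zero =>
    intro U hU k a x
    have hUe : U = ∅ := Finset.card_eq_zero.mp (Nat.le_zero.mp hU)
    subst hUe
    simp [sig, rho, Ksum]
  | succ n IH =>
    intro U hU k a x
    by_cases hUe : U = ∅
    · subst hUe
      simp [sig, rho, Ksum]
    obtain ⟨t, ht⟩ := Finset.nonempty_iff_ne_empty.mpr hUe
    set U' := U.erase t with hU'def
    set b := k t with hbdef
    have htU' : t ∉ U' := Finset.notMem_erase t U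
    have hins : U = insert t U' := (Finset.insert_erase ht).symm
    have hcard : U.card = U'.card + 1 := by
      rw [hU'def, Finset.card_erase_of_mem ht]
      have : 0 < U.card := Finset.card_pos.mpr ⟨t, ht⟩
      omega
    have hcard' : U'.card ≤ n := by omega
    have hKU : Ksum k U = b + Ksum k U' := by
      rw [hins, Ksum_insert k htU']
    -- LHS
    have hL : ffall (x + a + Ksum k U - 1) U.card
        = (∑ C ∈ U'.powerset, sig k (a+b) C * rho k x (U' \ C)) * (x + a + Ksum k U - 1 - U'.card) := by
      rw [hcard, ffall_succ, ← IH U' hcard' k (a+b) x]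
      congr 2
      rw [hKU]
      ring
    rw [hL]
    -- RHS
    conv_rhs => rw [hins, Finset.powerset_insert]
    rw [Finset.sum_union (by
      rw [Finset.disjoint_left]
      intro C hC1 hC2
      rw [Finset.mem_powerset] at hC1
      obtain ⟨C', _, rfl⟩ := Finset.mem_image.mp hC2
      exact htU' (hC1 (Finset.mem_insert_self t C')))]
    rw [Finset.sum_image (by
      intro C₁ h₁ C₂ h₂ he
      rw [Finset.mem_coe, Finset.mem_powerset] at h₁ h₂
      have e₁ : C₁ = (insert t C₁).erase t := (Finset.erase_insert (fun h => htU' (h₁ h))).symm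
      have e₂ : C₂ = (insert t C₂).erase t := (Finset.erase_insert (fun h => htU' (h₂ h))).symm
      rw [e₁, e₂, he])]
    have hsum1 : ∑ C ∈ U'.powerset, sig k a C * rho k x ((insert t U') \ C)
        = x * Th k U' a (x + b) := by
      rw [Th, Finset.mul_sum]
      apply Finset.sum_congr rfl
      intro C hC
      rw [Finset.mem_powerset] at hC
      have htC : t ∉ C := fun h => htU' (hC h)
      have hsd : (insert t U') \ C = insert t (U' \ C) :=
        Finset.insert_sdiff_of_notMem U' htC
      have htD : t ∉ U' \ C := fun h => htU' (Finset.mem_sdiff.mp h).1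
      rw [hsd, rho_insert k x htD]
      ring
    have hsum2 : ∑ C ∈ U'.powerset, sig k a (insert t C) * rho k x ((insert t U') \ insert t C)
        = ∑ C ∈ U'.powerset, sig k (a+b) C * ((a + b + Ksum k C - 1 - C.card) * rho k x (U' \ C)) := by
      apply Finset.sum_congr rfl
      intro C hC
      rw [Finset.mem_powerset] at hC
      have htC : t ∉ C := fun h => htU' (hC h)
      have hsd : (insert t U') \ insert t C = U' \ C := by
        rw [← hins, hU'def, sdiff_insert_eq]
      rw [hsd, sig, Ksum_insert k htC, Finset.card_insert_of_notMem htC, ffall_succ]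
      rw [show a + (b + Ksum k C) - 1 = (a + b) + Ksum k C - 1 by ring, ← sig]
      ring
    rw [hsum1, hsum2, show Th k U' a (x + b) = Th k U' (a+b) x from (theta (n+1) U' (by omega) k a x b).symm, Th,
      Finset.mul_sum, Finset.sum_mul, ← Finset.sum_add_distrib]
    apply Finset.sum_congr rfl
    intro C hC
    rw [Finset.mem_powerset] at hC
    have harith : x + a + Ksum k U - 1 - (U'.card : ℚ)
        = (x + Ksum k (U' \ C) - (U' \ C).card) + (a + b + Ksum k C - 1 - C.card) := by
      rw [hKU, Ksum_sdiff k hC, card_sdiff_q hC]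
      ring
    rw [harith]
    linear_combination (sig k (a+b) C) * rho_mul k x (U' \ C)

abbrev R14 := MvPolynomial ℕ ℚ

theorem Hpoly (U : Finset ℕ) (k : ℕ → R14) (a x : R14) :
    ffall (x + a + Ksum k U - 1) U.card = ∑ C ∈ U.powerset, sig k a C * rho k x (U \ C) := by
  apply MvPolynomial.funext
  intro φ
  rw [map_ffall (MvPolynomial.eval φ), map_sum]
  have h1 : (MvPolynomial.eval φ) (x + a + Ksum k U - 1)
      = (MvPolynomial.eval φ) x + (MvPolynomial.eval φ) a + Ksum ((MvPolynomial.eval φ) ∘ k) U - 1 := by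
    simp [map_Ksum]
  rw [h1, Hqq U.card U le_rfl ((MvPolynomial.eval φ) ∘ k) ((MvPolynomial.eval φ) a) ((MvPolynomial.eval φ) x)]
  apply Finset.sum_congr rfl
  intro C _
  rw [map_mul, map_sig, map_rho]

open scoped Classical in
/-- the tuples of `j` disjoint nonempty blocks partitioning `S` -/
noncomputable def Tup (S : Finset ℕ) (j : ℕ) : Finset (Fin j → Finset ℕ) :=
  (Fintype.piFinset fun _ => S.powerset).filter
    (fun c => (∀ i, (c i).Nonempty) ∧ Pairwise (Function.onFun Disjoint c) ∧
      Finset.univ.biUnion c = S)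

lemma mem_Tup {S : Finset ℕ} {j : ℕ} {c : Fin j → Finset ℕ} :
    c ∈ Tup S j ↔ ((∀ i, (c i).Nonempty) ∧ Pairwise (Function.onFun Disjoint c) ∧
      Finset.univ.biUnion c = S) := by
  classical
  rw [Tup]
  rw [Finset.mem_filter, and_iff_right_iff_imp]
  rintro ⟨h1, h2, h3⟩
  rw [Fintype.mem_piFinset]
  intro i
  rw [Finset.mem_powerset, ← h3]
  exact Finset.subset_biUnion_of_mem c (Finset.mem_univ i)

noncomputable def kX : ℕ → R14 := fun i => MvPolynomial.X i

/-- block weight -/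
noncomputable def gw (B : Finset ℕ) : R14 :=
  (∏ ℓ ∈ B, MvPolynomial.X ℓ) * ffall (Ksum kX B - 1) (B.card - 1)

noncomputable def Inner (S : Finset ℕ) (j : ℕ) : R14 := ∑ c ∈ Tup S j, ∏ i, gw (c i)

lemma biUnion_fin0 (c : Fin 0 → Finset ℕ) : Finset.univ.biUnion c = ∅ := by
  have : (Finset.univ : Finset (Fin 0)) = ∅ := rfl
  rw [this, Finset.biUnion_empty]

lemma Tup_zero (S : Finset ℕ) : Tup S 0 = if S = ∅ then {fun i => Fin.elim0 i} else ∅ := by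
  split
  · subst ‹S = ∅›
    ext c
    rw [mem_Tup]
    simp only [Finset.mem_singleton]
    constructor
    · intro _
      funext i
      exact i.elim0
    · intro h
      refine ⟨fun i => i.elim0, ?_, biUnion_fin0 c⟩
      intro i
      exact i.elim0
  · ext c
    rw [mem_Tup]
    simp only [Finset.notMem_empty, iff_false]
    rintro ⟨_, _, h3⟩
    exact ‹¬ S = ∅› (by rw [← h3, biUnion_fin0])

@[simp] lemma Inner_zero_empty : Inner ∅ 0 = 1 := by
  rw [Inner, Tup_zero, if_pos rfl]
  simp

lemma Inner_zero_nonempty {S : Finset ℕ} (h : S ≠ ∅) : Inner S 0 = 0 := by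
  rw [Inner, Tup_zero, if_neg h, Finset.sum_empty]

lemma Tup_card_lt {S : Finset ℕ} {j : ℕ} (h : S.card < j) : Tup S j = ∅ := by
  ext c
  rw [mem_Tup]
  simp only [Finset.notMem_empty, iff_false]
  rintro ⟨h1, h2, h3⟩
  have hcard : (Finset.univ.biUnion c).card = ∑ i : Fin j, (c i).card :=
    Finset.card_biUnion (fun i _ i' _ hne => h2 hne)
  have : j ≤ ∑ i : Fin j, (c i).card := by
    calc j = ∑ _i : Fin j, 1 := by simp
    _ ≤ ∑ i : Fin j, (c i).card := Finset.sum_le_sum (fun i _ => Finset.card_pos.mpr (h1 i))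
  rw [h3] at hcard
  omega

lemma Inner_card_lt {S : Finset ℕ} {j : ℕ} (h : S.card < j) : Inner S j = 0 := by
  rw [Inner, Tup_card_lt h, Finset.sum_empty]

lemma biUnion_succAbove {j : ℕ} (c : Fin (j+1) → Finset ℕ) (p : Fin (j+1)) :
    Finset.univ.biUnion c = c p ∪ Finset.univ.biUnion (fun i => c (p.succAbove i)) := by
  ext x
  simp only [Finset.mem_biUnion, Finset.mem_univ, true_and, Finset.mem_union]
  constructor
  · rintro ⟨q, hq⟩
    rcases eq_or_ne q p with rfl | hqp
    · exact Or.inl hq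
    · obtain ⟨z, hz⟩ := Fin.exists_succAbove_eq hqp
      exact Or.inr ⟨z, by rw [hz]; exact hq⟩
  · rintro (h | ⟨z, hz⟩)
    · exact ⟨p, h⟩
    · exact ⟨p.succAbove z, hz⟩

lemma Inner_succ {S : Finset ℕ} {s : ℕ} (hs : s ∈ S) (j : ℕ) :
    Inner S (j+1)
      = (j+1) • ∑ C ∈ (S.erase s).powerset, gw (insert s C) * Inner (S \ insert s C) j := by
  classical
  have step2 : ∀ p : Fin (j+1),
      ∑ c ∈ (Tup S (j+1)).filter (fun c => s ∈ c p), ∏ i, gw (c i)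
        = ∑ C ∈ (S.erase s).powerset, gw (insert s C) * Inner (S \ insert s C) j := by
    intro p
    have hrhs : ∑ C ∈ (S.erase s).powerset, gw (insert s C) * Inner (S \ insert s C) j
        = ∑ x ∈ ((S.erase s).powerset).sigma (fun C => Tup (S \ insert s C) j),
            gw (insert s x.fst) * ∏ i, gw (x.snd i) := by
      rw [← Finset.sum_sigma' ((S.erase s).powerset) (fun C => Tup (S \ insert s C) j)
        (fun C c' => gw (insert s C) * ∏ i, gw (c' i))]
      apply Finset.sum_congr rfl
      intro C _
      rw [Inner, Finset.mul_sum]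
    rw [hrhs]
    apply Finset.sum_nbij' (i := fun c => (⟨(c p).erase s, p.removeNth c⟩ :
        Σ _ : Finset ℕ, (Fin j → Finset ℕ)))
      (j := fun x => p.insertNth (insert s x.fst) x.snd)
    · -- forward membership
      intro c hc
      rw [Finset.mem_filter] at hc
      obtain ⟨hcT, hscp⟩ := hc
      rw [mem_Tup] at hcT
      obtain ⟨h1, h2, h3⟩ := hcT
      have hcpS : c p ⊆ S := by
        rw [← h3]; exact Finset.subset_biUnion_of_mem c (Finset.mem_univ p)
      have hins : insert s ((c p).erase s) = c p := Finset.insert_erase hscp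
      rw [Finset.mem_sigma]
      constructor
      · rw [Finset.mem_powerset]
        exact Finset.erase_subset_erase s hcpS
      · rw [mem_Tup, hins]
        refine ⟨fun i => h1 _, ?_, ?_⟩
        · intro i i' hne
          exact h2 (fun h => hne (Fin.succAbove_right_injective h))
        · have : p.removeNth c = fun i => c (p.succAbove i) := rfl
          rw [this]
          have hdecomp := biUnion_succAbove c p
          rw [h3] at hdecomp
          ext x
          simp only [Finset.mem_biUnion, Finset.mem_univ, true_and, Finset.mem_sdiff]
          constructor
          · rintro ⟨z, hz⟩
            refine ⟨?_, ?_⟩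
            · rw [hdecomp]; exact Finset.mem_union_right _ (Finset.mem_biUnion.mpr ⟨z, Finset.mem_univ z, hz⟩)
            · intro hxp
              exact Finset.disjoint_left.mp (h2 (Fin.succAbove_ne p z)) hz hxp
          · rintro ⟨hxS, hxcp⟩
            rw [hdecomp] at hxS
            rcases Finset.mem_union.mp hxS with h | h
            · exact absurd h hxcp
            · obtain ⟨z, _, hz⟩ := Finset.mem_biUnion.mp h
              exact ⟨z, hz⟩
    · -- backward membership
      rintro ⟨C, c'⟩ hx
      dsimp only at hx ⊢
      rw [Finset.mem_sigma, Finset.mem_powerset] at hx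
      obtain ⟨hC, hc'⟩ := hx
      rw [mem_Tup] at hc'
      obtain ⟨h1, h2, h3⟩ := hc'
      have hsC : s ∉ C := fun h => Finset.notMem_erase s S (hC h)
      have hinsS : insert s C ⊆ S := Finset.insert_subset hs (hC.trans (Finset.erase_subset s S))
      set cc : Fin (j+1) → Finset ℕ := p.insertNth (insert s C) c' with hcc
      have happ : ∀ z : Fin j, cc (p.succAbove z) = c' z :=
        fun z => Fin.insertNth_apply_succAbove (α := fun _ => Finset ℕ) p (insert s C) c' z
      have happ_p : cc p = insert s C :=
        Fin.insertNth_apply_same (α := fun _ => Finset ℕ) p (insert s C) c'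
      have hc'sub : ∀ z, c' z ⊆ S \ insert s C := by
        intro z
        rw [← h3]
        exact Finset.subset_biUnion_of_mem c' (Finset.mem_univ z)
      have hdis : ∀ z : Fin j, Disjoint (insert s C) (c' z) := by
        intro z
        rw [Finset.disjoint_left]
        intro x hx hx'
        exact (Finset.mem_sdiff.mp (hc'sub z hx')).2 hx
      rw [Finset.mem_filter, mem_Tup]
      refine ⟨⟨?_, ?_, ?_⟩, ?_⟩
      · intro i
        rcases eq_or_ne i p with hip | hip
        · rw [hip, happ_p]; exact Finset.insert_nonempty s C
        · obtain ⟨z, hz⟩ := Fin.exists_succAbove_eq hip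
          rw [← hz, happ]
          exact h1 z
      · intro i i' hne
        show Disjoint (cc i) (cc i')
        rcases eq_or_ne i p with hip | hip
        · obtain ⟨z, hz⟩ := Fin.exists_succAbove_eq (hip ▸ Ne.symm hne)
          rw [hip, happ_p, ← hz, happ]
          exact hdis z
        · obtain ⟨z, hz⟩ := Fin.exists_succAbove_eq hip
          rcases eq_or_ne i' p with hip' | hip'
          · rw [hip', happ_p, ← hz, happ]
            exact (hdis z).symm
          · obtain ⟨z', hz'⟩ := Fin.exists_succAbove_eq hip'
            rw [← hz, ← hz', happ, happ]
            exact h2 (fun h => hne (by rw [← hz, ← hz', h]))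
      · rw [biUnion_succAbove cc p, happ_p]
        have he : (fun i => cc (p.succAbove i)) = c' := funext happ
        rw [he, h3]
        exact Finset.union_sdiff_of_subset hinsS
      · rw [happ_p]
        exact Finset.mem_insert_self s C
    · -- left inverse
      intro c hc
      rw [Finset.mem_filter] at hc
      have hins : insert s ((c p).erase s) = c p := Finset.insert_erase hc.2
      rw [hins]
      exact Fin.insertNth_self_removeNth p c
    · -- right inverse
      rintro ⟨C, c'⟩ hx
      dsimp only at hx ⊢
      rw [Finset.mem_sigma, Finset.mem_powerset] at hx
      have hsC : s ∉ C := fun h => Finset.notMem_erase s S (hx.1 h)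
      have e1 : ((p.insertNth (α := fun _ => Finset ℕ) (insert s C) c' p).erase s) = C := by
        rw [Fin.insertNth_apply_same, Finset.erase_insert hsC]
      have e2 : (p.removeNth (p.insertNth (α := fun _ => Finset ℕ) (insert s C) c')) = c' :=
        Fin.removeNth_insertNth (α := fun _ => Finset ℕ) p (insert s C) c'
      exact Sigma.ext e1 (heq_of_eq e2)
    · -- value
      intro c hc
      rw [Finset.mem_filter] at hc
      have hins : insert s ((c p).erase s) = c p := Finset.insert_erase hc.2
      show ∏ i, gw (c i) = gw (insert s ((c p).erase s)) * ∏ i, gw (p.removeNth c i)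
      rw [hins]
      exact Fin.prod_univ_succAbove (fun i => gw (c i)) p
  -- step 1: split by which block contains s
  have split1 : ∀ c ∈ Tup S (j+1),
      ∏ i, gw (c i) = ∑ p : Fin (j+1), if s ∈ c p then ∏ i, gw (c i) else 0 := by
    intro c hc
    rw [mem_Tup] at hc
    obtain ⟨h1, h2, h3⟩ := hc
    have hex : s ∈ Finset.univ.biUnion c := h3.symm ▸ hs
    obtain ⟨p0, _, hp0⟩ := Finset.mem_biUnion.mp hex
    have hfilter : Finset.univ.filter (fun p => s ∈ c p) = {p0} := by
      ext q
      simp only [Finset.mem_filter, Finset.mem_univ, true_and, Finset.mem_singleton]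
      constructor
      · intro hq
        by_contra hne
        exact Finset.disjoint_left.mp (h2 hne) hq hp0
      · rintro rfl; exact hp0
    rw [← Finset.sum_filter, hfilter, Finset.sum_singleton]
  rw [Inner, Finset.sum_congr rfl split1, Finset.sum_comm]
  have : ∀ p : Fin (j+1),
      ∑ c ∈ Tup S (j+1), (if s ∈ c p then ∏ i, gw (c i) else 0)
        = ∑ C ∈ (S.erase s).powerset, gw (insert s C) * Inner (S \ insert s C) j := by
    intro p
    rw [← Finset.sum_filter]
    exact step2 p
  rw [Finset.sum_congr rfl (fun p _ => this p), Finset.sum_const, Finset.card_univ,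
    Fintype.card_fin]

theorem main : ∀ (n : ℕ) (S : Finset ℕ), S.card ≤ n → S.Nonempty → ∀ x : R14,
    x * (∏ ℓ ∈ S, MvPolynomial.X ℓ) * ffall (x + Ksum kX S - 1) (S.card - 1)
      = ∑ j ∈ Finset.range S.card,
          MvPolynomial.C (((j+1).factorial : ℚ)⁻¹) * x^(j+1) * Inner S (j+1) := by
  intro n
  induction n with
  | zero =>
    intro S hc hS x
    have := Finset.card_pos.mpr hS
    omega
  | succ n IH =>
    intro S hc hS x
    obtain ⟨s, hs⟩ := hS
    have hns : s ∉ S.erase s := Finset.notMem_erase s S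
    have hpos : 0 < S.card := Finset.card_pos.mpr ⟨s, hs⟩
    have hcard : S.card = (S.erase s).card + 1 := by
      rw [Finset.card_erase_of_mem hs]; omega
    have hKS : Ksum kX S = kX s + Ksum kX (S.erase s) := by
      conv_lhs => rw [← Finset.insert_erase hs]
      rw [Ksum_insert kX hns]
    have hcoef : ∀ j : ℕ, (MvPolynomial.C (((j+1).factorial : ℚ)⁻¹) : R14) * (((j+1) : ℕ) : R14)
        = MvPolynomial.C ((j.factorial : ℚ)⁻¹) := by
      intro j
      rw [← map_natCast (MvPolynomial.C : ℚ →+* R14) (j+1), ← map_mul]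
      congr 1
      rw [Nat.factorial_succ]
      have h1 : ((j+1 : ℕ) : ℚ) ≠ 0 := by positivity
      have h2 : ((j.factorial : ℕ) : ℚ) ≠ 0 := Nat.cast_ne_zero.mpr (Nat.factorial_ne_zero j)
      push_cast
      field_simp
    -- Step A+B : peel the block containing s
    have stepAB : ∑ j ∈ Finset.range S.card,
          MvPolynomial.C (((j+1).factorial : ℚ)⁻¹) * x^(j+1) * Inner S (j+1)
        = ∑ C ∈ (S.erase s).powerset, gw (insert s C) *
            ∑ j ∈ Finset.range S.card,
              MvPolynomial.C ((j.factorial : ℚ)⁻¹) * x^(j+1) * Inner (S.erase s \ C) j := by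
      have hA : ∀ j ∈ Finset.range S.card,
          MvPolynomial.C (((j+1).factorial : ℚ)⁻¹) * x^(j+1) * Inner S (j+1)
          = ∑ C ∈ (S.erase s).powerset, gw (insert s C) *
              (MvPolynomial.C ((j.factorial : ℚ)⁻¹) * x^(j+1) * Inner (S.erase s \ C) j) := by
        intro j _
        rw [Inner_succ hs j, nsmul_eq_mul, Finset.mul_sum, Finset.mul_sum]
        apply Finset.sum_congr rfl
        intro C _
        rw [sdiff_insert_eq]
        linear_combination (x^(j+1) * gw (insert s C) * Inner (S.erase s \ C) j) * hcoef j
      rw [Finset.sum_congr rfl hA, Finset.sum_comm]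
      apply Finset.sum_congr rfl
      intro C _
      rw [Finset.mul_sum]
    -- Step C : evaluate the inner generating sum via the induction hypothesis
    have stepC : ∀ C ∈ (S.erase s).powerset,
        ∑ j ∈ Finset.range S.card,
            MvPolynomial.C ((j.factorial : ℚ)⁻¹) * x^(j+1) * Inner (S.erase s \ C) j
        = if C = S.erase s then x
          else x * (x * (∏ ℓ ∈ (S.erase s \ C), MvPolynomial.X ℓ) *
            ffall (x + Ksum kX (S.erase s \ C) - 1) ((S.erase s \ C).card - 1)) := by
      intro C hC
      rw [Finset.mem_powerset] at hC
      rw [hcard, Finset.sum_range_succ']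
      by_cases hCe : C = S.erase s
      · rw [if_pos hCe]
        have hTe : S.erase s \ C = ∅ := by rw [hCe, Finset.sdiff_self]
        rw [hTe]
        rw [Finset.sum_eq_zero (fun j _ => by
          rw [Inner_card_lt (by simp)]
          ring)]
        simp [Inner_zero_empty]
      · rw [if_neg hCe]
        have hTne : S.erase s \ C ≠ ∅ := by
          intro h
          exact hCe (Finset.Subset.antisymm hC (Finset.sdiff_eq_empty_iff_subset.mp h))
        have hTn : (S.erase s \ C).Nonempty := Finset.nonempty_iff_ne_empty.mpr hTne
        have hTcard : (S.erase s \ C).card ≤ (S.erase s).card :=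
          Finset.card_le_card Finset.sdiff_subset
        rw [Inner_zero_nonempty hTne]
        rw [← Finset.sum_subset (Finset.range_subset_range.mpr hTcard) (fun j _ hj => by
          rw [Inner_card_lt (by rw [Finset.mem_range] at hj; omega)]
          ring)]
        have hTle : (S.erase s \ C).card ≤ n := by omega
        have hx : ∑ j ∈ Finset.range (S.erase s \ C).card,
              MvPolynomial.C (((j+1).factorial : ℚ)⁻¹) * x^(j+1+1) * Inner (S.erase s \ C) (j+1)
            = x * ∑ j ∈ Finset.range (S.erase s \ C).card,
              MvPolynomial.C (((j+1).factorial : ℚ)⁻¹) * x^(j+1) * Inner (S.erase s \ C) (j+1) := by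
          rw [Finset.mul_sum]
          exact Finset.sum_congr rfl (fun j _ => by ring)
        rw [hx, ← IH (S.erase s \ C) hTle hTn x]
        simp only [Nat.factorial_zero, Nat.cast_one, inv_one, map_one, pow_one, mul_zero, add_zero,
          one_mul]
    -- assemble
    rw [stepAB, Finset.sum_congr rfl (fun C hC => by rw [stepC C hC])]
    -- expand LHS via the Hurwitz identity
    have harg : x + Ksum kX S - 1 = x + kX s + Ksum kX (S.erase s) - 1 := by
      rw [hKS]; ring
    have hcard1 : S.card - 1 = (S.erase s).card := by omega
    rw [harg, hcard1, Hpoly (S.erase s) kX (kX s) x, Finset.mul_sum]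
    apply Finset.sum_congr rfl
    intro C hC
    rw [Finset.mem_powerset] at hC
    have hsC : s ∉ C := fun h => hns (hC h)
    have hsub : insert s C ⊆ S := Finset.insert_subset hs (hC.trans (Finset.erase_subset s S))
    by_cases hCe : C = S.erase s
    · rw [if_pos hCe, hCe, Finset.sdiff_self, rho, if_pos rfl]
      have h1 : insert s (S.erase s) = S := Finset.insert_erase hs
      rw [h1, gw, sig, ← hKS, hcard1]
      ring
    · rw [if_neg hCe]
      have hTne : S.erase s \ C ≠ ∅ := by
        intro h
        exact hCe (Finset.Subset.antisymm hC (Finset.sdiff_eq_empty_iff_subset.mp h))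
      rw [rho, if_neg hTne]
      have hgw : gw (insert s C) = (∏ ℓ ∈ insert s C, (MvPolynomial.X ℓ : R14)) * sig kX (kX s) C := by
        rw [gw, sig, Ksum_insert kX hsC, Finset.card_insert_of_notMem hsC, Nat.add_sub_cancel]
      have hq : (∏ ℓ ∈ (S.erase s \ C), (MvPolynomial.X ℓ : R14)) * (∏ ℓ ∈ insert s C, (MvPolynomial.X ℓ : R14))
          = ∏ ℓ ∈ S, (MvPolynomial.X ℓ : R14) := by
        rw [← sdiff_insert_eq]
        exact Finset.prod_sdiff hsub
      rw [hgw, ← hq]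
      ring

lemma gw_eq (B : Finset ℕ) :
    (∏ ℓ ∈ B, (MvPolynomial.X ℓ : R14)) *
      ffall ((∑ u ∈ B, MvPolynomial.X u) - 1) (B.card - 1) = gw B := rfl

lemma inner_finsum (S : Finset ℕ) (j : ℕ) :
    (∑ᶠ (c : Fin j → Finset ℕ)
        (_ : (∀ i, (c i).Nonempty) ∧ Pairwise (Function.onFun Disjoint c) ∧
              Finset.univ.biUnion c = S),
        ∏ i : Fin j,
          (∏ ℓ ∈ c i, (MvPolynomial.X ℓ : R14)) *
            ffall ((∑ u ∈ c i, MvPolynomial.X u) - 1) ((c i).card - 1))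
      = Inner S j := by
  rw [finsum_cond_eq_sum_of_cond_iff _ (fun {c} _ => mem_Tup.symm)]
  rw [Inner]
  apply Finset.sum_congr rfl
  intro c _
  exact Finset.prod_congr rfl (fun i _ => gw_eq (c i))

end S14


/-- The identity proved via multivariate Lagrange inversion: for `r ≥ 2`,
`k_1 ⋯ k_r · (K − 1)_{r−2}
  = Σ_{j ≥ 1} (k_1^j / j!) Σ_{(X_1,…,X_j)} ∏_{i=1}^{j} (∏_{ℓ ∈ X_i} k_ℓ) (K_{X_i} − 1)_{|X_i|−1}`,
where `K = k_1 + ⋯ + k_r`, the inner sum is over ordered `j`-tuples of pairwise disjoint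
nonempty sets with union `{2, …, r}`, and `K_{X_i} = Σ_{u ∈ X_i} k_u`.
This is an identity in `ℚ[k_1, …, k_r]` (the variable `i` is `k_i`). -/
theorem stmt14 (r : ℕ) (hr : 2 ≤ r) :
    (∏ i ∈ Finset.Icc 1 r, (MvPolynomial.X i : MvPolynomial ℕ ℚ)) *
        ffall ((∑ i ∈ Finset.Icc 1 r, MvPolynomial.X i) - 1) (r - 2)
      = ∑ᶠ (j : ℕ) (_ : 1 ≤ j),
          MvPolynomial.C ((j.factorial : ℚ)⁻¹) * MvPolynomial.X 1 ^ j *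
            ∑ᶠ (c : Fin j → Finset ℕ)
              (_ : (∀ i, (c i).Nonempty) ∧ Pairwise (Function.onFun Disjoint c) ∧
                    Finset.univ.biUnion c = Finset.Icc 2 r),
              ∏ i : Fin j,
                (∏ ℓ ∈ c i, MvPolynomial.X ℓ) *
                  ffall ((∑ u ∈ c i, MvPolynomial.X u) - 1) ((c i).card - 1) := by
  classical
  open S14 in
  set S : Finset ℕ := Finset.Icc 2 r with hSdef
  have hS : S.Nonempty := ⟨2, by rw [hSdef, Finset.mem_Icc]; omega⟩
  have hcardS : S.card = r - 1 := by rw [hSdef, Nat.card_Icc]; omega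
  have h1S : (1 : ℕ) ∉ S := by rw [hSdef, Finset.mem_Icc]; omega
  have hIcc : Finset.Icc 1 r = insert 1 S := by
    ext i
    rw [Finset.mem_Icc, Finset.mem_insert, hSdef, Finset.mem_Icc]
    omega
  -- rewrite RHS
  have hrhs : ∑ᶠ (j : ℕ) (_ : 1 ≤ j),
          MvPolynomial.C ((j.factorial : ℚ)⁻¹) * MvPolynomial.X 1 ^ j *
            ∑ᶠ (c : Fin j → Finset ℕ)
              (_ : (∀ i, (c i).Nonempty) ∧ Pairwise (Function.onFun Disjoint c) ∧
                    Finset.univ.biUnion c = S),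
              ∏ i : Fin j,
                (∏ ℓ ∈ c i, (MvPolynomial.X ℓ : MvPolynomial ℕ ℚ)) *
                  ffall ((∑ u ∈ c i, MvPolynomial.X u) - 1) ((c i).card - 1)
      = ∑ j ∈ Finset.Icc 1 S.card,
          MvPolynomial.C ((j.factorial : ℚ)⁻¹) * MvPolynomial.X 1 ^ j * Inner S j := by
    rw [finsum_congr (fun j => finsum_congr (fun _ => by rw [inner_finsum S j]))]
    apply finsum_cond_eq_sum_of_cond_iff
    intro j hj
    rw [Finset.mem_Icc]
    constructor
    · intro h1
      refine ⟨h1, ?_⟩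
      by_contra hgt
      exact hj (by rw [Inner_card_lt (by omega), mul_zero])
    · exact fun h => h.1
  rw [hrhs]
  -- rewrite LHS and apply main
  have hL : (∏ i ∈ Finset.Icc 1 r, (MvPolynomial.X i : MvPolynomial ℕ ℚ)) *
        ffall ((∑ i ∈ Finset.Icc 1 r, MvPolynomial.X i) - 1) (r - 2)
      = MvPolynomial.X 1 * (∏ ℓ ∈ S, MvPolynomial.X ℓ) *
          ffall (MvPolynomial.X 1 + Ksum kX S - 1) (S.card - 1) := by
    rw [hIcc, Finset.prod_insert h1S, Finset.sum_insert h1S]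
    have : S.card - 1 = r - 2 := by omega
    rw [this]
    rfl
  rw [hL, main (S.card) S le_rfl hS (MvPolynomial.X 1)]
  -- reindex
  rw [show Finset.Icc 1 S.card = Finset.Ico 1 (S.card + 1) by ext; simp,
    Finset.sum_Ico_eq_sum_range]
  simp only [Nat.add_sub_cancel]
  apply Finset.sum_congr rfl
  intro j _
  rw [Nat.add_comm 1 j]
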